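/- (Proposition 1) For each player i and each k ∈ ℕ₀, the Δ^κ-rationalization procedure stabilizes for the level-k type after k steps: Σᵗ_{θ_{ik}} = Σᵏ_{θ_{ik}} for every t ≥ k. -/

import Mathlib

open scoped BigOperators
open Classical

noncomputable section

/-- A belief of a player: a probability distribution over
(opponent level-type, opponent action) pairs. -/
structure Belief (B : Type*) where
  p : ℕ × B → ℝ
  nonneg : ∀ x, 0 ≤ p x
  hasSum_one : HasSum p 1

/-- Marginal probability assigned to the opponent's level-`t` type. -/
def Belief.marg {B : Type*} [Fintype B] (μ : Belief B) (t : ℕ) : ℝ := ∑ b : B, μ.p (t, b)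

/-- Probability assigned by a belief to a set of (level, action) pairs. -/
def Belief.probOn {B : Type*} (μ : Belief B) (S : Set (ℕ × B)) : ℝ := ∑' x, S.indicator μ.p x

/-- `f` normalized to the levels `0, …, k-1` (denoted `f^k` in the paper). -/
def fnorm (f : ℕ → ℝ) (k t : ℕ) : ℝ := f t / ∑ ℓ ∈ Finset.range k, f ℓ

/-- Membership in `Δ^{θ_{ik}}`: conditions K1–K3 for `k ≥ 1`; no restriction for `k = 0`. -/
def memDelta {B : Type*} [Fintype B] (f : ℕ → ℝ) (k : ℕ) (μ : Belief B) : Prop :=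
  k ≠ 0 →
    ((∀ t, k ≤ t → μ.marg t = 0) ∧
     (0 < μ.marg 0 → ∀ b : B, μ.p (0, b) / μ.marg 0 = 1 / (Fintype.card B : ℝ)) ∧
     (∀ t, t < k → μ.marg t = fnorm f k t))

/-- Expected payoff of own action `a` for the own level-`k` type given belief `μ`:
the level-0 type's payoff is constant `0`, all other types get `v`. -/
def expPay {A B : Type*} (v : A → B → ℝ) (k : ℕ) (μ : Belief B) (a : A) : ℝ :=
  ∑' x : ℕ × B, μ.p x * (if k = 0 then 0 else v a x.2)

/-- `a` is a best response to belief `μ` under the own level-`k` type. -/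
def isBR {A B : Type*} (v : A → B → ℝ) (k : ℕ) (μ : Belief B) (a : A) : Prop :=
  ∀ a' : A, expPay v k μ a' ≤ expPay v k μ a

/-- The Δ^κ-rationalization procedure; component 1 is player 1's set of surviving
(level, action) pairs, component 2 is player 2's. -/
def SigmaProc {A B : Type*} [Fintype A] [Fintype B]
    (v1 : A → B → ℝ) (v2 : B → A → ℝ) (f : ℕ → ℝ) :
    ℕ → Set (ℕ × A) × Set (ℕ × B)
  | 0 => (Set.univ, Set.univ)
  | n + 1 =>
      let P := SigmaProc v1 v2 f n
      ({x | x ∈ P.1 ∧ ∃ μ : Belief B, memDelta f x.1 μ ∧ μ.probOn P.2 = 1 ∧ isBR v1 x.1 μ x.2},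
       {y | y ∈ P.2 ∧ ∃ μ : Belief A, memDelta f y.1 μ ∧ μ.probOn P.1 = 1 ∧ isBR v2 y.1 μ y.2})

/-- The section `Σⁿ_{θ_{1k}}` of player 1 (as a set of actions). -/
def SigmaSec1 {A B : Type*} [Fintype A] [Fintype B]
    (v1 : A → B → ℝ) (v2 : B → A → ℝ) (f : ℕ → ℝ) (n k : ℕ) : Set A :=
  {a | (k, a) ∈ (SigmaProc v1 v2 f n).1}

/-- The section `Σⁿ_{θ_{2k}}` of player 2 (as a set of actions). -/
def SigmaSec2 {A B : Type*} [Fintype A] [Fintype B]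
    (v1 : A → B → ℝ) (v2 : B → A → ℝ) (f : ℕ → ℝ) (n k : ℕ) : Set B :=
  {b | (k, b) ∈ (SigmaProc v1 v2 f n).2}

/-- The CH-procedure requirement on beliefs at step `n+1`, given the previous
sections `Ψⁿ` of the opponent: the support of `μ` equals `∪_{t=0}^{n} Ψⁿ_{θ_{-i,t}}`
and `μ` is conditionally uniform over each `Ψⁿ_{θ_{-i,t}}`. -/
def CHBelief {B : Type*} (Ψ : ℕ → Set B) (n : ℕ) (μ : Belief B) : Prop :=
  (∀ x : ℕ × B, μ.p x ≠ 0 ↔ x.1 ≤ n ∧ x.2 ∈ Ψ x.1) ∧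
  (∀ t, t ≤ n → ∀ b b' : B, b ∈ Ψ t → b' ∈ Ψ t → μ.p (t, b) = μ.p (t, b'))

/-- The CH-procedure: step `n` returns, for each player and each level `k`,
the set of actions in `Ψⁿ_{θ_{ik}}`. -/
def CHProc {A B : Type*} [Fintype A] [Fintype B]
    (v1 : A → B → ℝ) (v2 : B → A → ℝ) (f : ℕ → ℝ) :
    ℕ → (ℕ → Set A) × (ℕ → Set B)
  | 0 => (fun _ => Set.univ, fun _ => Set.univ)
  | n + 1 =>
      let P := CHProc v1 v2 f n
      (fun k =>
        if k = n + 1 then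
          {a | ∃ μ : Belief B, memDelta f (n + 1) μ ∧ CHBelief P.2 n μ ∧ isBR v1 (n + 1) μ a}
        else P.1 k,
       fun k =>
        if k = n + 1 then
          {b | ∃ μ : Belief A, memDelta f (n + 1) μ ∧ CHBelief P.1 n μ ∧ isBR v2 (n + 1) μ b}
        else P.2 k)

/-- `Ψⁿ_{θ_{1k}}` for player 1 (as a set of actions). -/
def CHSec1 {A B : Type*} [Fintype A] [Fintype B]
    (v1 : A → B → ℝ) (v2 : B → A → ℝ) (f : ℕ → ℝ) (n k : ℕ) : Set A :=
  (CHProc v1 v2 f n).1 k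

/-- `Ψⁿ_{θ_{2k}}` for player 2 (as a set of actions). -/
def CHSec2 {A B : Type*} [Fintype A] [Fintype B]
    (v1 : A → B → ℝ) (v2 : B → A → ℝ) (f : ℕ → ℝ) (n k : ℕ) : Set B :=
  (CHProc v1 v2 f n).2 k

end


noncomputable section Aux

variable {A B : Type*} [Fintype A] [Fintype B]

/-- Point-mass belief on `(0, b)`. -/
def pointBelief {B : Type*} (b : B) : Belief B where
  p := fun x => if x = (0, b) then 1 else 0
  nonneg := fun x => by split <;> norm_num
  hasSum_one := hasSum_ite_eq (0, b) 1

lemma pointBelief_probOn {B : Type*} (b : B) (S : Set (ℕ × B)) (hS : (0, b) ∈ S) :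
    (pointBelief b).probOn S = 1 := by
  have h : S.indicator (pointBelief b).p = (pointBelief b).p := by
    funext x
    by_cases hx : x ∈ S
    · simp [Set.indicator_of_mem hx]
    · have hne : x ≠ (0, b) := fun h => hx (h ▸ hS)
      simp [Set.indicator_of_notMem hx, pointBelief, hne]
  rw [Belief.probOn, h, (pointBelief b).hasSum_one.tsum_eq]

lemma memDelta_zero {B : Type*} [Fintype B] (f : ℕ → ℝ) (μ : Belief B) :
    memDelta f 0 μ := fun h => absurd rfl h

lemma isBR_zero {A B : Type*} (v : A → B → ℝ) (μ : Belief B) (a : A) :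
    isBR v 0 μ a := by intro a'; simp [expPay]

lemma sigma_succ1 (v1 : A → B → ℝ) (v2 : B → A → ℝ) (f : ℕ → ℝ) (n : ℕ) (x : ℕ × A) :
    x ∈ (SigmaProc v1 v2 f (n + 1)).1 ↔
      x ∈ (SigmaProc v1 v2 f n).1 ∧ ∃ μ : Belief B, memDelta f x.1 μ ∧
        μ.probOn (SigmaProc v1 v2 f n).2 = 1 ∧ isBR v1 x.1 μ x.2 := Iff.rfl

lemma sigma_succ2 (v1 : A → B → ℝ) (v2 : B → A → ℝ) (f : ℕ → ℝ) (n : ℕ) (y : ℕ × B) :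
    y ∈ (SigmaProc v1 v2 f (n + 1)).2 ↔
      y ∈ (SigmaProc v1 v2 f n).2 ∧ ∃ μ : Belief A, memDelta f y.1 μ ∧
        μ.probOn (SigmaProc v1 v2 f n).1 = 1 ∧ isBR v2 y.1 μ y.2 := Iff.rfl

lemma level0_mem [Nonempty A] [Nonempty B] (v1 : A → B → ℝ) (v2 : B → A → ℝ) (f : ℕ → ℝ) :
    ∀ n, (∀ a : A, (0, a) ∈ (SigmaProc v1 v2 f n).1) ∧
         (∀ b : B, (0, b) ∈ (SigmaProc v1 v2 f n).2) := by
  intro n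
  induction n with
  | zero => exact ⟨fun a => Set.mem_univ _, fun b => Set.mem_univ _⟩
  | succ n ih =>
    obtain ⟨h1, h2⟩ := ih
    refine ⟨fun a => (sigma_succ1 v1 v2 f n (0, a)).mpr ⟨h1 a, ?_⟩,
            fun b => (sigma_succ2 v1 v2 f n (0, b)).mpr ⟨h2 b, ?_⟩⟩
    · exact ⟨pointBelief (Classical.arbitrary B), memDelta_zero f _,
        pointBelief_probOn _ _ (h2 _), isBR_zero v1 _ a⟩
    · exact ⟨pointBelief (Classical.arbitrary A), memDelta_zero f _,
        pointBelief_probOn _ _ (h1 _), isBR_zero v2 _ b⟩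

lemma sigma_antitone (v1 : A → B → ℝ) (v2 : B → A → ℝ) (f : ℕ → ℝ) {m n : ℕ} (h : m ≤ n) :
    (SigmaProc v1 v2 f n).1 ⊆ (SigmaProc v1 v2 f m).1 ∧
    (SigmaProc v1 v2 f n).2 ⊆ (SigmaProc v1 v2 f m).2 := by
  induction n, h using Nat.le_induction with
  | base => exact ⟨le_refl _, le_refl _⟩
  | succ n h ih =>
    exact ⟨fun x hx => ih.1 ((sigma_succ1 v1 v2 f n x).mp hx).1,
           fun y hy => ih.2 ((sigma_succ2 v1 v2 f n y).mp hy).1⟩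

lemma memDelta_support {B : Type*} [Fintype B] {f : ℕ → ℝ} {k : ℕ} (hk : k ≠ 0)
    {μ : Belief B} (h : memDelta f k μ) : ∀ t, k ≤ t → ∀ b, μ.p (t, b) = 0 := by
  intro t ht b
  have hm : ∑ b : B, μ.p (t, b) = 0 := (h hk).1 t ht
  exact (Finset.sum_eq_zero_iff_of_nonneg (fun b _ => μ.nonneg (t, b))).mp hm b
    (Finset.mem_univ b)

lemma probOn_congr {B : Type*} {μ : Belief B} {k : ℕ}
    (hμ : ∀ t, k ≤ t → ∀ b, μ.p (t, b) = 0)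
    {S S' : Set (ℕ × B)} (h : ∀ t, t < k → ∀ b : B, ((t, b) ∈ S ↔ (t, b) ∈ S')) :
    μ.probOn S = μ.probOn S' := by
  unfold Belief.probOn
  congr 1
  funext x
  obtain ⟨t, b⟩ := x
  by_cases ht : t < k
  · by_cases hx : (t, b) ∈ S
    · rw [Set.indicator_of_mem hx, Set.indicator_of_mem ((h t ht b).mp hx)]
    · rw [Set.indicator_of_notMem hx,
        Set.indicator_of_notMem (fun hx' => hx ((h t ht b).mpr hx'))]
  · have h0 := hμ t (le_of_not_gt ht) b
    by_cases hx : (t, b) ∈ S <;> by_cases hx' : (t, b) ∈ S' <;>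
      simp [Set.indicator, hx, hx', h0]

end Aux

/-- Proposition 1: the Δ^κ-rationalization procedure stabilizes for the
level-k type after k steps, for each player. -/
theorem sigma_stabilizes_at_level {A B : Type*} [Fintype A] [Fintype B] [Nonempty A] [Nonempty B]
    (v1 : A → B → ℝ) (v2 : B → A → ℝ)
    (f : ℕ → ℝ) (hf : ∀ n, 0 < f n) (hfsum : HasSum f 1) :
    ∀ k t : ℕ, k ≤ t →
      SigmaSec1 v1 v2 f t k = SigmaSec1 v1 v2 f k k ∧
      SigmaSec2 v1 v2 f t k = SigmaSec2 v1 v2 f k k := by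
  intro k
  induction k using Nat.strong_induction_on with
  | _ k IH =>
    intro t ht
    induction t, ht using Nat.le_induction with
    | base => exact ⟨rfl, rfl⟩
    | succ t ht IHt =>
      rcases Nat.eq_zero_or_pos k with hk | hk
      · subst hk
        constructor
        · ext a
          simp only [SigmaSec1, Set.mem_setOf_eq]
          exact ⟨fun _ => (level0_mem v1 v2 f 0).1 a, fun _ => (level0_mem v1 v2 f (t + 1)).1 a⟩
        · ext b
          simp only [SigmaSec2, Set.mem_setOf_eq]
          exact ⟨fun _ => (level0_mem v1 v2 f 0).2 b, fun _ => (level0_mem v1 v2 f (t + 1)).2 b⟩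
      · have hk0 : k ≠ 0 := Nat.pos_iff_ne_zero.mp hk
        have hkm : k - 1 + 1 = k := Nat.succ_pred_eq_of_pos hk
        -- sections below k agree between step t and step k-1
        have hagree2 : ∀ j, j < k → ∀ b : B,
            ((j, b) ∈ (SigmaProc v1 v2 f t).2 ↔ (j, b) ∈ (SigmaProc v1 v2 f (k - 1)).2) := by
          intro j hj b
          have e1 : SigmaSec2 v1 v2 f t j = SigmaSec2 v1 v2 f j j :=
            (IH j hj t (le_trans (le_of_lt hj) ht)).2
          have e2 : SigmaSec2 v1 v2 f (k - 1) j = SigmaSec2 v1 v2 f j j :=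
            (IH j hj (k - 1) (Nat.le_pred_of_lt hj)).2
          have : b ∈ SigmaSec2 v1 v2 f t j ↔ b ∈ SigmaSec2 v1 v2 f (k - 1) j := by
            rw [e1, e2]
          exact this
        have hagree1 : ∀ j, j < k → ∀ a : A,
            ((j, a) ∈ (SigmaProc v1 v2 f t).1 ↔ (j, a) ∈ (SigmaProc v1 v2 f (k - 1)).1) := by
          intro j hj a
          have e1 : SigmaSec1 v1 v2 f t j = SigmaSec1 v1 v2 f j j :=
            (IH j hj t (le_trans (le_of_lt hj) ht)).1
          have e2 : SigmaSec1 v1 v2 f (k - 1) j = SigmaSec1 v1 v2 f j j :=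
            (IH j hj (k - 1) (Nat.le_pred_of_lt hj)).1
          have : a ∈ SigmaSec1 v1 v2 f t j ↔ a ∈ SigmaSec1 v1 v2 f (k - 1) j := by
            rw [e1, e2]
          exact this
        have step1 : SigmaSec1 v1 v2 f (t + 1) k = SigmaSec1 v1 v2 f t k := by
          ext a
          simp only [SigmaSec1, Set.mem_setOf_eq]
          constructor
          · intro h; exact ((sigma_succ1 v1 v2 f t (k, a)).mp h).1
          · intro h
            have hka : (k, a) ∈ (SigmaProc v1 v2 f (k - 1 + 1)).1 := by
              rw [hkm]; exact (sigma_antitone v1 v2 f ht).1 h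
            obtain ⟨_, μ, hμd, hμp, hμb⟩ := (sigma_succ1 v1 v2 f (k - 1) (k, a)).mp hka
            refine (sigma_succ1 v1 v2 f t (k, a)).mpr ⟨h, μ, hμd, ?_, hμb⟩
            rw [probOn_congr (memDelta_support hk0 hμd) (fun j hj b => hagree2 j hj b)]
            exact hμp
        have step2 : SigmaSec2 v1 v2 f (t + 1) k = SigmaSec2 v1 v2 f t k := by
          ext b
          simp only [SigmaSec2, Set.mem_setOf_eq]
          constructor
          · intro h; exact ((sigma_succ2 v1 v2 f t (k, b)).mp h).1
          · intro h
            have hkb : (k, b) ∈ (SigmaProc v1 v2 f (k - 1 + 1)).2 := by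
              rw [hkm]; exact (sigma_antitone v1 v2 f ht).2 h
            obtain ⟨_, μ, hμd, hμp, hμb⟩ := (sigma_succ2 v1 v2 f (k - 1) (k, b)).mp hkb
            refine (sigma_succ2 v1 v2 f t (k, b)).mpr ⟨h, μ, hμd, ?_, hμb⟩
            rw [probOn_congr (memDelta_support hk0 hμd) (fun j hj a => hagree1 j hj a)]
            exact hμp
        exact ⟨step1.trans IHt.1, step2.trans IHt.2⟩
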